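/- Let μ, ν > −1/2. Then for all x, y > 0, ∫_{|x−y|}^{x+y} |R_{μ,ν}(x,y,z)| (xy)^{−μ} z^{μ+1} dz = (1/√(2π)) ∫_{−1}^{1} (1−t²)^{μ/2−1/4} |P^{1/2−μ}_{ν−1/2}(t)| dt, as an equality of (possibly infinite) Lebesgue integrals; in particular the left-hand side does not depend on x and y. -/

import Mathlib

open MeasureTheory Real Set Filter Topology

/-- Gauss hypergeometric function ₂F₁(a,b;c;s) as a power series. -/
noncomputable def hyp2F1 (a b c s : ℝ) : ℝ :=
  ∑' n : ℕ, ((∏ i ∈ Finset.range n, (a + i)) * (∏ i ∈ Finset.range n, (b + i)) /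
    ((∏ i ∈ Finset.range n, (c + i)) * n.factorial)) * s ^ n

/-- Associated Legendre function of the first kind, for -1 < t < 1. -/
noncomputable def legendreP (μ ν t : ℝ) : ℝ :=
  (1 / Real.Gamma (1 - μ)) * ((1 + t) / (1 - t)) ^ (μ / 2) *
    hyp2F1 (ν + 1) (-ν) (1 - μ) ((1 - t) / 2)

/-- The real factor of the associated Legendre function of the second kind (t > 1),
i.e. `Q^μ_ν(t)` without its phase `e^{iπμ}`. -/
noncomputable def legendreQreal (μ ν t : ℝ) : ℝ :=
  Real.sqrt Real.pi * Real.Gamma (μ + ν + 1) * (t ^ 2 - 1) ^ (μ / 2) /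
    ((2 : ℝ) ^ (ν + 1) * t ^ (μ + ν + 1) * Real.Gamma (ν + 3 / 2)) *
    hyp2F1 ((μ + ν) / 2 + 1) ((μ + ν + 1) / 2) (ν + 3 / 2) (1 / t ^ 2)

/-- Associated Legendre function of the second kind, for t > 1. -/
noncomputable def legendreQ (μ ν t : ℝ) : ℂ :=
  Complex.exp ((Real.pi * μ : ℝ) * Complex.I) * (legendreQreal μ ν t : ℝ)

/-- Macdonald's integral `R_{μ,ν}(x,y,z)` of three Bessel functions, for x, y, z > 0. -/
noncomputable def Rmn (μ ν x y z : ℝ) : ℝ :=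
  if z < |x - y| then 0
  else if z < x + y then
    (x * y) ^ (μ - 1) *
      Real.sqrt (1 - ((x ^ 2 + y ^ 2 - z ^ 2) / (2 * x * y)) ^ 2) ^ (μ - 1 / 2) *
      legendreP (1 / 2 - μ) (ν - 1 / 2) ((x ^ 2 + y ^ 2 - z ^ 2) / (2 * x * y)) /
      (Real.sqrt (2 * Real.pi) * z ^ μ)
  else
    Real.sin ((ν - μ) * Real.pi) * (x * y) ^ (μ - 1) *
      Real.sqrt (((z ^ 2 - x ^ 2 - y ^ 2) / (2 * x * y)) ^ 2 - 1) ^ (μ - 1 / 2) *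
      legendreQreal (1 / 2 - μ) (ν - 1 / 2) ((z ^ 2 - x ^ 2 - y ^ 2) / (2 * x * y)) /
      (Real.sqrt (Real.pi ^ 3 / 2) * z ^ μ)

/-- Normalized Bessel function 𝒥_ν. -/
noncomputable def normBessel (ν w : ℝ) : ℝ :=
  Real.Gamma (ν + 1) *
    ∑' n : ℕ, (-1 : ℝ) ^ n * (w / 2) ^ (2 * n) / (n.factorial * Real.Gamma (ν + n + 1))

/-- Bessel function of the first kind J_ν. -/
noncomputable def besselJ (ν w : ℝ) : ℝ :=
  (w / 2) ^ ν *
    ∑' n : ℕ, (-1 : ℝ) ^ n * (w / 2) ^ (2 * n) / (n.factorial * Real.Gamma (ν + n + 1))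

/-- The constant m_{k,a}. -/
noncomputable def mka (k a : ℝ) : ℂ :=
  Complex.exp ((-(Real.pi / a) : ℝ) * Complex.I) *
    ((Real.Gamma ((2 * k + a - 1) / a) /
      (a ^ ((2 : ℝ) / a) * Real.Gamma ((2 * k + a + 1) / a)) : ℝ) : ℂ)

/-- The one-dimensional (k,a)-generalized Fourier kernel B_{k,a}(λ,x). -/
noncomputable def Bka (k a lam x : ℝ) : ℂ :=
  ((normBessel ((2 * k - 1) / a) ((2 / a) * |lam * x| ^ (a / 2)) : ℝ) : ℂ) +
    mka k a * ((lam * x : ℝ) : ℂ) *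
      ((normBessel ((2 * k + 1) / a) ((2 / a) * |lam * x| ^ (a / 2)) : ℝ) : ℂ)

/-- The kernel Δ_{k,a}(x,y,z) of the product formula. -/
noncomputable def DeltaKA (k a x y z : ℝ) : ℂ :=
  ((a * (2 : ℝ) ^ ((2 * k - 1) / a - 2) * Real.Gamma ((2 * k - 1) / a + 1) *
      |x * y * z| ^ ((1 : ℝ) / 2 - k) : ℝ) : ℂ) *
  (((Rmn ((2 * k - 1) / a) ((2 * k - 1) / a) (|x| ^ (a / 2)) (|y| ^ (a / 2)) (|z| ^ (a / 2)) : ℝ) : ℂ) +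
    Complex.exp ((-(2 * Real.pi / a) : ℝ) * Complex.I) * ((Real.sign (x * y) : ℝ) : ℂ) *
      ((Rmn ((2 * k - 1) / a) ((2 * k + 1) / a) (|x| ^ (a / 2)) (|y| ^ (a / 2)) (|z| ^ (a / 2)) : ℝ) : ℂ) +
    ((Real.sign (x * z) : ℝ) : ℂ) *
      ((Rmn ((2 * k - 1) / a) ((2 * k + 1) / a) (|x| ^ (a / 2)) (|z| ^ (a / 2)) (|y| ^ (a / 2)) : ℝ) : ℂ) +
    ((Real.sign (y * z) : ℝ) : ℂ) *
      ((Rmn ((2 * k - 1) / a) ((2 * k + 1) / a) (|y| ^ (a / 2)) (|z| ^ (a / 2)) (|x| ^ (a / 2)) : ℝ) : ℂ))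

/-- The weighted measure |x|^{2k+a-2} dx on ℝ. -/
noncomputable def wMeasure (k a : ℝ) : Measure ℝ :=
  volume.withDensity fun x => ENNReal.ofReal (|x| ^ (2 * k + a - 2))

/-- Gegenbauer polynomial C_n^μ. -/
noncomputable def gegenbauer (μ : ℝ) (n : ℕ) (x : ℝ) : ℝ :=
  ∑ j ∈ Finset.range (n / 2 + 1),
    (-1 : ℝ) ^ j * Real.Gamma ((n : ℝ) - j + μ) /
      (Real.Gamma μ * j.factorial * (n - 2 * j).factorial) * (2 * x) ^ (n - 2 * j)
/-- The trigonometric-range integral of |R_{μ,ν}| reduces to an integral of the Legendre P function. -/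
theorem statement11 (μ ν : ℝ) (hμ : -(1 / 2) < μ) (hν : -(1 / 2) < ν)
    (x y : ℝ) (hx : 0 < x) (hy : 0 < y) :
    ∫⁻ z in Set.Ioo |x - y| (x + y),
        ENNReal.ofReal (|Rmn μ ν x y z| * (x * y) ^ (-μ) * z ^ (μ + 1)) =
      ENNReal.ofReal (1 / Real.sqrt (2 * Real.pi)) *
        ∫⁻ t in Set.Ioo (-1 : ℝ) 1,
          ENNReal.ofReal ((1 - t ^ 2) ^ (μ / 2 - 1 / 4) *
            |legendreP (1 / 2 - μ) (ν - 1 / 2) t|) := by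
  have hxy : (0:ℝ) < x * y := mul_pos hx hy
  set b : ℝ := 2 * (x * y) with hb
  have hbpos : 0 < b := by positivity
  set c : ℝ := x ^ 2 + y ^ 2 with hc
  set f : ℝ → ℝ := fun t => Real.sqrt (c - b * t) with hf
  have hrange : ∀ t ∈ Set.Ioo (-1:ℝ) 1, (x-y)^2 < c - b*t ∧ c - b*t < (x+y)^2 := by
    intro t ht
    constructor <;> nlinarith [ht.1, ht.2]
  have hpos : ∀ t ∈ Set.Ioo (-1:ℝ) 1, 0 < c - b*t := by
    intro t ht
    exact lt_of_le_of_lt (sq_nonneg (x-y)) (hrange t ht).1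
  have hfpos : ∀ t ∈ Set.Ioo (-1:ℝ) 1, 0 < f t := by
    intro t ht
    exact Real.sqrt_pos.mpr (hpos t ht)
  have hfsq : ∀ t ∈ Set.Ioo (-1:ℝ) 1, (f t)^2 = c - b*t := by
    intro t ht
    exact Real.sq_sqrt (hpos t ht).le
  have hfmem : ∀ t ∈ Set.Ioo (-1:ℝ) 1, f t ∈ Set.Ioo |x - y| (x + y) := by
    intro t ht
    obtain ⟨h1, h2⟩ := hrange t ht
    constructor
    · rw [← Real.sqrt_sq_eq_abs]
      exact Real.sqrt_lt_sqrt (sq_nonneg _) h1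
    · calc f t < Real.sqrt ((x+y)^2) := Real.sqrt_lt_sqrt (by nlinarith) h2
        _ = x + y := by rw [Real.sqrt_sq (by positivity)]
  have himg : f '' Set.Ioo (-1:ℝ) 1 = Set.Ioo |x - y| (x + y) := by
    apply Set.Subset.antisymm
    · rintro _ ⟨t, ht, rfl⟩; exact hfmem t ht
    · rintro z ⟨hz1, hz2⟩
      refine ⟨(c - z^2)/b, ⟨?_, ?_⟩, ?_⟩
      · rw [lt_div_iff₀ hbpos]
        have : z^2 < (x+y)^2 := by
          have : |z| < x + y := by
            rw [abs_of_nonneg (le_trans (abs_nonneg _) hz1.le)]; exact hz2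
          nlinarith [abs_nonneg z, neg_abs_le z, le_abs_self z]
        nlinarith
      · rw [div_lt_iff₀ hbpos]
        have : (x-y)^2 < z^2 := by
          have hza : |x - y| < |z| := lt_of_lt_of_le hz1 (le_abs_self z)
          calc (x-y)^2 = |x-y|^2 := (sq_abs _).symm
            _ < |z|^2 := by nlinarith [abs_nonneg (x-y)]
            _ = z^2 := sq_abs z
        nlinarith
      · show Real.sqrt (c - b * ((c - z^2)/b)) = z
        rw [mul_div_cancel₀ _ hbpos.ne']
        simp only [sub_sub_cancel]
        exact Real.sqrt_sq (le_trans (abs_nonneg _) hz1.le)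
  have hinj : Set.InjOn f (Set.Ioo (-1:ℝ) 1) := by
    intro t1 h1 t2 h2 heq
    have e1 := hfsq t1 h1
    have e2 := hfsq t2 h2
    have hcc : c - b * t1 = c - b * t2 := by rw [← e1, ← e2, heq]
    have hbt : b * t1 = b * t2 := by linarith
    exact mul_left_cancel₀ hbpos.ne' hbt
  have hderiv : ∀ t ∈ Set.Ioo (-1:ℝ) 1,
      HasDerivWithinAt f (-(b / (2 * f t))) (Set.Ioo (-1:ℝ) 1) t := by
    intro t ht
    have h1 : HasDerivAt (fun s : ℝ => c - b * s) (-b) t := by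
      simpa using ((hasDerivAt_id t).const_mul b).const_sub c
    have h2 : HasDerivAt Real.sqrt (1 / (2 * Real.sqrt (c - b * t))) (c - b * t) :=
      Real.hasDerivAt_sqrt (hpos t ht).ne'
    have := h2.comp t h1
    have heq : 1 / (2 * Real.sqrt (c - b * t)) * (-b) = -(b / (2 * f t)) := by
      simp only [hf]; field_simp
    rw [heq] at this
    exact this.hasDerivWithinAt
  -- change of variables
  have key := MeasureTheory.lintegral_image_eq_lintegral_abs_det_fderiv_mul
    (volume : Measure ℝ) measurableSet_Ioo
    (f' := fun t => (1 : ℝ →L[ℝ] ℝ).smulRight (-(b / (2 * f t))))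
    (fun t ht => (hderiv t ht).hasFDerivWithinAt) hinj
    (fun z => ENNReal.ofReal (|Rmn μ ν x y z| * (x * y) ^ (-μ) * z ^ (μ + 1)))
  simp only [ContinuousLinearMap.det_smulRight, ContinuousLinearMap.one_apply, one_mul] at key
  rw [← himg, key]
  rw [← MeasureTheory.lintegral_const_mul' _ _ ENNReal.ofReal_ne_top]
  apply MeasureTheory.setLIntegral_congr_fun measurableSet_Ioo
  intro t ht
  beta_reduce
  obtain ⟨ht1, ht2⟩ := ht
  have htmem : t ∈ Set.Ioo (-1:ℝ) 1 := ⟨ht1, ht2⟩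
  set z : ℝ := f t with hz
  have hzpos : 0 < z := hfpos t htmem
  have hzmem := hfmem t htmem
  have hzsq : z ^ 2 = c - b * t := hfsq t htmem
  have ht2pos : 0 < 1 - t ^ 2 := by nlinarith
  -- the argument of legendreP is t
  have harg : (x ^ 2 + y ^ 2 - z ^ 2) / (2 * x * y) = t := by
    rw [hzsq, hc]
    field_simp [hb]
    ring
  -- unfold Rmn
  have hR : Rmn μ ν x y z =
      (x * y) ^ (μ - 1) * Real.sqrt (1 - t ^ 2) ^ (μ - 1 / 2) *
        legendreP (1 / 2 - μ) (ν - 1 / 2) t / (Real.sqrt (2 * Real.pi) * z ^ μ) := by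
    rw [Rmn, if_neg (not_lt.mpr hzmem.1.le), if_pos hzmem.2, harg]
  have hsqrt_rpow : Real.sqrt (1 - t ^ 2) ^ (μ - 1 / 2) =
      (1 - t ^ 2) ^ (μ / 2 - 1 / 4) := by
    rw [Real.sqrt_eq_rpow, ← Real.rpow_mul ht2pos.le]
    norm_num
    ring_nf
  have hsqpi : 0 < Real.sqrt (2 * Real.pi) := Real.sqrt_pos.mpr (by positivity)
  have hzmu : (0:ℝ) < z ^ μ := Real.rpow_pos_of_pos hzpos μ
  have habs : |Rmn μ ν x y z| =
      (x * y) ^ (μ - 1) * (1 - t ^ 2) ^ (μ / 2 - 1 / 4) *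
        |legendreP (1 / 2 - μ) (ν - 1 / 2) t| / (Real.sqrt (2 * Real.pi) * z ^ μ) := by
    rw [hR, hsqrt_rpow, abs_div, abs_mul, abs_mul,
      abs_of_pos (Real.rpow_pos_of_pos hxy _),
      abs_of_pos (Real.rpow_pos_of_pos ht2pos _),
      abs_of_pos (mul_pos hsqpi hzmu)]
  rw [← ENNReal.ofReal_mul (abs_nonneg _), ← ENNReal.ofReal_mul (by positivity)]
  congr 1
  have hd : |(-(b / (2 * z)))| = b / (2 * z) := by
    rw [abs_neg, abs_of_pos (by positivity)]
  rw [hd, habs]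
  have e1 : (x*y) ^ (μ-1) = (x*y) ^ μ / (x*y) := by
    rw [Real.rpow_sub hxy, Real.rpow_one]
  have e2 : (x*y) ^ (-μ) = ((x*y) ^ μ)⁻¹ := Real.rpow_neg hxy.le μ
  have e3 : z ^ (μ+1) = z ^ μ * z := by
    rw [Real.rpow_add hzpos, Real.rpow_one]
  rw [e1, e2, e3]
  have hxymu : (0:ℝ) < (x*y) ^ μ := Real.rpow_pos_of_pos hxy μ
  field_simp [hb]
  ring
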